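/- Let u > 1, let s̄ < u, and let P be a probability measure on ℝ supported in [0, s̄] with mean ∫ s dP(s) = 1. Then (u − 1)·∫ s/(u − s) dP(s) ≥ 1, and the inequality is strict unless P is the Dirac measure at 1. -/
import Mathlib

open MeasureTheory

/-- Let `u > 1`, `s̄ < u`, and let `P` be a probability measure on `ℝ` supported in
`[0, s̄]` with mean `1`.  Then `(u − 1)·∫ s/(u − s) dP(s) ≥ 1`, with strict inequality
unless `P` is the Dirac measure at `1`. -/
theorem stmt_11 (u sbar : ℝ) (hu : 1 < u) (hsbar : sbar < u)
    (P : Measure ℝ) [IsProbabilityMeasure P]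
    (hsupp : P (Set.Icc 0 sbar)ᶜ = 0)
    (hmean : ∫ s, s ∂P = 1) :
    1 ≤ (u - 1) * ∫ s, s / (u - s) ∂P ∧
      (P ≠ Measure.dirac 1 → 1 < (u - 1) * ∫ s, s / (u - s) ∂P) := by
  have hu0 : (0:ℝ) < u - 1 := by linarith
  have hae : ∀ᵐ s ∂P, s ∈ Set.Icc 0 sbar := by
    rw [MeasureTheory.ae_iff]; exact hsupp
  have hsb0 : 0 ≤ sbar := by
    by_contra h
    push_neg at h
    have he : Set.Icc (0:ℝ) sbar = ∅ := Set.Icc_eq_empty (by linarith)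
    rw [he, Set.compl_empty] at hsupp
    have := measure_univ (μ := P)
    rw [hsupp] at this
    simp at this
  have hid : Integrable (fun s : ℝ => s) P :=
    integrable_of_integral_eq_one hmean
  have hfmeas : AEStronglyMeasurable (fun s : ℝ => s / (u - s)) P :=
    (measurable_id.div (measurable_const.sub measurable_id)).aestronglyMeasurable
  have hfbound : ∀ᵐ s ∂P, ‖s / (u - s)‖ ≤ sbar / (u - sbar) := by
    filter_upwards [hae] with s hs
    obtain ⟨h0, h1⟩ := hs
    have hus : 0 < u - s := by linarith
    have husb : 0 < u - sbar := by linarith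
    rw [Real.norm_eq_abs, abs_of_nonneg (div_nonneg h0 hus.le)]
    rw [div_le_div_iff₀ hus husb]
    nlinarith
  have hfint : Integrable (fun s : ℝ => s / (u - s)) P :=
    ⟨hfmeas, HasFiniteIntegral.of_bounded hfbound⟩
  have hkey : ∀ᵐ s ∂P, (u - 1) * (s / (u - s)) =
      ((u / (u - 1)) * s + (1 - u / (u - 1))) + u * (s - 1)^2 / ((u - s) * (u - 1)) := by
    filter_upwards [hae] with s hs
    have hus : (0:ℝ) < u - s := by linarith [hs.2]
    field_simp
    ring
  have hlin : Integrable (fun s : ℝ => (u / (u - 1)) * s + (1 - u / (u - 1))) P :=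
    (hid.const_mul _).add (integrable_const _)
  have hgint : Integrable (fun s : ℝ => u * (s - 1)^2 / ((u - s) * (u - 1))) P := by
    have h2 : Integrable (fun s : ℝ =>
        (u - 1) * (s / (u - s)) - ((u / (u - 1)) * s + (1 - u / (u - 1)))) P :=
      (hfint.const_mul _).sub hlin
    apply h2.congr
    filter_upwards [hkey] with s hsk
    linarith
  have hg0 : ∀ᵐ s ∂P, 0 ≤ u * (s - 1)^2 / ((u - s) * (u - 1)) := by
    filter_upwards [hae] with s hs
    have hus : (0:ℝ) < u - s := by linarith [hs.2]
    positivity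
  have hlinI : ∫ s, ((u / (u - 1)) * s + (1 - u / (u - 1))) ∂P = 1 := by
    rw [integral_add (hid.const_mul _) (integrable_const _), integral_const_mul, hmean,
      integral_const]
    simp
  have hint : (u - 1) * ∫ s, s / (u - s) ∂P =
      1 + ∫ s, u * (s - 1)^2 / ((u - s) * (u - 1)) ∂P := by
    rw [← integral_const_mul, integral_congr_ae hkey, integral_add hlin hgint, hlinI]
  have hgI : 0 ≤ ∫ s, u * (s - 1)^2 / ((u - s) * (u - 1)) ∂P := integral_nonneg_of_ae hg0
  constructor
  · rw [hint]; linarith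
  · intro hne
    rw [hint]
    rcases lt_or_eq_of_le hgI with h | h
    · linarith
    · exfalso
      apply hne
      have hz : (fun s : ℝ => u * (s - 1)^2 / ((u - s) * (u - 1))) =ᵐ[P] 0 :=
        (integral_eq_zero_iff_of_nonneg_ae hg0 hgint).mp h.symm
      have h1 : ∀ᵐ s ∂P, s = 1 := by
        filter_upwards [hz, hae] with s hzs hs
        have hus : (0:ℝ) < u - s := by linarith [hs.2]
        have hd : ((u - s) * (u - 1)) ≠ 0 := by positivity
        simp only [Pi.zero_apply, div_eq_zero_iff, hd, or_false] at hzs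
        nlinarith [sq_nonneg (s - 1)]
      have hne1 : P {s : ℝ | ¬ s = 1} = 0 := ae_iff.mp h1
      ext A hA
      rw [Measure.dirac_apply' _ hA]
      by_cases h1A : (1:ℝ) ∈ A
      · have hc : P Aᶜ = 0 := by
          apply measure_mono_null _ hne1
          intro x hx hx1
          exact hx (hx1 ▸ h1A)
        simp only [Set.indicator_of_mem h1A, Pi.one_apply]
        exact (prob_compl_eq_zero_iff hA).mp hc
      · have : P A = 0 := by
          apply measure_mono_null _ hne1
          intro x hx hx1
          exact h1A (hx1 ▸ hx)
        simp [Set.indicator_of_notMem h1A, this]
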